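/- Let f : ℝ^n × ℝ^m → ℝ^n be continuously differentiable, let u, v : ℝ → ℝ^m be continuous, let s₀ ∈ ℝ^n, let T > 0 and δ > 0. Suppose S : (−δ,δ) × [0,T] → ℝ^n is continuous, satisfies the integral equation S(ε,t) = s₀ + ∫₀^t f(S(ε,t'), u(t') + ε·v(t')) dt' for all ε ∈ (−δ,δ) and t ∈ [0,T], and that the partial derivative ∂_ε S exists and is continuous on (−δ,δ) × [0,T]. Then the first variation z(t) := ∂_ε S(ε,t)|_{ε=0} satisfies the time-varying linear Volterra integral equation z(t) = ∫₀^t [A(t')·z(t') + B(t')·v(t')] dt' for all t ∈ [0,T], where A(t') = ∂f/∂s evaluated at (S(0,t'), u(t')) and B(t') = ∂f/∂u evaluated at (S(0,t'), u(t')). -/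

import Mathlib

open MeasureTheory

private lemma aux_fderiv_split {E F G : Type*} [NormedAddCommGroup E] [NormedSpace ℝ E]
    [NormedAddCommGroup F] [NormedSpace ℝ F] [NormedAddCommGroup G] [NormedSpace ℝ G]
    (f : E × F → G) (hf : Differentiable ℝ f) (p : E × F) (a : E) (b : F) :
    (fderiv ℝ f p) (a, b)
      = (fderiv ℝ (fun y => f (y, p.2)) p.1) a + (fderiv ℝ (fun w => f (p.1, w)) p.2) b := by
  have h : HasFDerivAt f (fderiv ℝ f p) (p.1, p.2) := by
    simpa using (hf p).hasFDerivAt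
  have h1 : HasFDerivAt (fun y => f (y, p.2))
      ((fderiv ℝ f p).comp (ContinuousLinearMap.inl ℝ E F)) p.1 :=
    h.comp p.1 (hasFDerivAt_prodMk_left p.1 p.2)
  have h2 : HasFDerivAt (fun w => f (p.1, w))
      ((fderiv ℝ f p).comp (ContinuousLinearMap.inr ℝ E F)) p.2 :=
    h.comp p.2 (hasFDerivAt_prodMk_right p.1 p.2)
  rw [h1.fderiv, h2.fderiv]
  simp only [ContinuousLinearMap.coe_comp', Function.comp_apply,
    ContinuousLinearMap.inl_apply, ContinuousLinearMap.inr_apply, ← map_add]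
  congr 1
  simp

set_option maxHeartbeats 1000000 in
/-- Let `f : ℝ^n × ℝ^m → ℝ^n` be C¹, `u, v : ℝ → ℝ^m` continuous,
`s₀ ∈ ℝ^n`, `T > 0`, `δ > 0`. Suppose `S : (−δ,δ) × [0,T] → ℝ^n` is continuous,
satisfies `S(ε,t) = s₀ + ∫₀ᵗ f(S(ε,t'), u(t') + ε·v(t')) dt'`, and the partial
derivative `∂_ε S` exists and is continuous on `(−δ,δ) × [0,T]`. Then the first
variation `z(t) = ∂_ε S(ε,t)|_{ε=0}` satisfies the time-varying linear Volterra
integral equation `z(t) = ∫₀ᵗ [A(t')·z(t') + B(t')·v(t')] dt'`, where `A(t')`,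
`B(t')` are the Jacobians of `f` in the state and control arguments evaluated
along the unperturbed trajectory. -/
theorem first_variation_satisfies_linear_volterra
    (n m : ℕ)
    (f : EuclideanSpace ℝ (Fin n) × EuclideanSpace ℝ (Fin m) → EuclideanSpace ℝ (Fin n))
    (hf : ContDiff ℝ 1 f)
    (u v : ℝ → EuclideanSpace ℝ (Fin m)) (hu : Continuous u) (hv : Continuous v)
    (s₀ : EuclideanSpace ℝ (Fin n)) (T δ : ℝ) (hT : 0 < T) (hδ : 0 < δ)
    (S : ℝ → ℝ → EuclideanSpace ℝ (Fin n))
    (hS_cont : ContinuousOn (fun p : ℝ × ℝ => S p.1 p.2)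
      (Set.Ioo (-δ) δ ×ˢ Set.Icc 0 T))
    (hS_eq : ∀ ε ∈ Set.Ioo (-δ) δ, ∀ t ∈ Set.Icc (0:ℝ) T,
      S ε t = s₀ + ∫ t' in (0:ℝ)..t, f (S ε t', u t' + ε • v t'))
    (Z : ℝ → ℝ → EuclideanSpace ℝ (Fin n))
    (hZ : ∀ ε ∈ Set.Ioo (-δ) δ, ∀ t ∈ Set.Icc (0:ℝ) T,
      HasDerivAt (fun e => S e t) (Z ε t) ε)
    (hZ_cont : ContinuousOn (fun p : ℝ × ℝ => Z p.1 p.2)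
      (Set.Ioo (-δ) δ ×ˢ Set.Icc 0 T)) :
    ∀ t ∈ Set.Icc (0:ℝ) T,
      Z 0 t = ∫ t' in (0:ℝ)..t,
        ((fderiv ℝ (fun y => f (y, u t')) (S 0 t')) (Z 0 t')
          + (fderiv ℝ (fun w => f (S 0 t', w)) (u t')) (v t')) := by
  intro t ht
  have hdf : Differentiable ℝ f := hf.differentiable one_ne_zero
  have h0δ : (0:ℝ) ∈ Set.Ioo (-δ) δ := ⟨by linarith, hδ⟩
  have hr : (0:ℝ) < δ/2 := by linarith
  have hball : Metric.ball (0:ℝ) (δ/2) ⊆ Set.Ioo (-δ) δ := by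
    intro x hx
    rw [Real.ball_eq_Ioo] at hx
    constructor <;> [nlinarith [hx.1]; nlinarith [hx.2]]
  have hIcc : Metric.closedBall (0:ℝ) (δ/2) ⊆ Set.Ioo (-δ) δ := by
    intro x hx
    rw [Real.closedBall_eq_Icc] at hx
    constructor <;> [nlinarith [hx.1]; nlinarith [hx.2]]
  have hIoc : Set.uIoc (0:ℝ) t ⊆ Set.Icc 0 T := by
    rw [Set.uIoc_of_le ht.1]
    exact (Set.Ioc_subset_Icc_self).trans (Set.Icc_subset_Icc_right ht.2)
  -- the integrand and its ε-derivative
  set F : ℝ → ℝ → EuclideanSpace ℝ (Fin n) :=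
    fun e t' => f (S e t', u t' + e • v t') with hF
  set F' : ℝ → ℝ → EuclideanSpace ℝ (Fin n) :=
    fun e t' => (fderiv ℝ f (S e t', u t' + e • v t')) (Z e t', v t') with hF'
  -- continuity of slices
  have hScont' : ∀ e ∈ Set.Ioo (-δ) δ, ContinuousOn (fun t' => S e t') (Set.Icc 0 T) := by
    intro e he
    have h1 : ContinuousOn (fun t' : ℝ => ((e, t') : ℝ × ℝ)) (Set.Icc 0 T) := by fun_prop
    exact hS_cont.comp h1 (fun t' ht' => ⟨he, ht'⟩)
  have hZcont' : ∀ e ∈ Set.Ioo (-δ) δ, ContinuousOn (fun t' => Z e t') (Set.Icc 0 T) := by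
    intro e he
    have h1 : ContinuousOn (fun t' : ℝ => ((e, t') : ℝ × ℝ)) (Set.Icc 0 T) := by fun_prop
    exact hZ_cont.comp h1 (fun t' ht' => ⟨he, ht'⟩)
  have hFcont : ∀ e ∈ Set.Ioo (-δ) δ, ContinuousOn (F e) (Set.Icc 0 T) := by
    intro e he
    exact hf.continuous.comp_continuousOn
      (((hScont' e he).prodMk (by fun_prop)))
  have hF'cont : ContinuousOn (F' 0) (Set.Icc 0 T) := by
    have hc : Continuous (fderiv ℝ f) := hf.continuous_fderiv one_ne_zero
    apply ContinuousOn.clm_apply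
    · exact hc.comp_continuousOn (((hScont' 0 h0δ).prodMk (by fun_prop)))
    · exact ((hZcont' 0 h0δ).prodMk hv.continuousOn)
  -- uniform bound on F' over the small ball
  set K : Set (ℝ × ℝ) := Metric.closedBall (0:ℝ) (δ/2) ×ˢ Set.Icc 0 T with hK
  have hKsub : K ⊆ Set.Ioo (-δ) δ ×ˢ Set.Icc 0 T := fun p hp => ⟨hIcc hp.1, hp.2⟩
  have hKcomp : IsCompact K := (isCompact_closedBall _ _).prod isCompact_Icc
  have hbcont : ContinuousOn
      (fun p : ℝ × ℝ => ‖fderiv ℝ f (S p.1 p.2, u p.2 + p.1 • v p.2)‖ * (‖Z p.1 p.2‖ + ‖v p.2‖)) K := by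
    have hc : Continuous (fderiv ℝ f) := hf.continuous_fderiv one_ne_zero
    apply ContinuousOn.mul
    · exact (hc.comp_continuousOn
        (((hS_cont.mono hKsub)).prodMk (by fun_prop))).norm
    · exact ((hZ_cont.mono hKsub).norm.add (by fun_prop))
  obtain ⟨C, hC⟩ := hKcomp.exists_bound_of_continuousOn hbcont
  have hboundF' : ∀ x ∈ Metric.ball (0:ℝ) (δ/2), ∀ t' ∈ Set.Icc 0 T, ‖F' x t'‖ ≤ C := by
    intro x hx t' ht'
    have hxK : (x, t') ∈ K := ⟨Metric.ball_subset_closedBall hx, ht'⟩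
    have h1 : ‖F' x t'‖ ≤ ‖fderiv ℝ f (S x t', u t' + x • v t')‖ * ‖(Z x t', v t')‖ :=
      ContinuousLinearMap.le_opNorm _ _
    have h2 : ‖(Z x t', v t')‖ ≤ ‖Z x t'‖ + ‖v t'‖ := by
      rw [Prod.norm_def]
      exact max_le (le_add_of_nonneg_right (norm_nonneg _))
        (le_add_of_nonneg_left (norm_nonneg _))
    calc ‖F' x t'‖ ≤ ‖fderiv ℝ f (S x t', u t' + x • v t')‖ * ‖(Z x t', v t')‖ := h1
      _ ≤ ‖fderiv ℝ f (S x t', u t' + x • v t')‖ * (‖Z x t'‖ + ‖v t'‖) :=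
          mul_le_mul_of_nonneg_left h2 (norm_nonneg _)
      _ ≤ C := (le_abs_self _).trans (by rw [← Real.norm_eq_abs]; exact hC (x, t') hxK)
  -- differentiate under the integral
  have hm1 : ∀ᶠ x in nhds (0:ℝ), AEStronglyMeasurable (F x) (volume.restrict (Set.uIoc 0 t)) := by
    filter_upwards [Metric.ball_mem_nhds (0:ℝ) hr] with x hx
    exact (((hFcont x (hball hx)).mono hIoc)).aestronglyMeasurable measurableSet_uIoc
  have hm2 : IntervalIntegrable (F 0) volume 0 t :=
    ((hFcont 0 h0δ).mono
      (by rw [Set.uIcc_of_le ht.1]; exact Set.Icc_subset_Icc_right ht.2)).intervalIntegrable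
  have hm3 : AEStronglyMeasurable (F' 0) (volume.restrict (Set.uIoc 0 t)) :=
    (hF'cont.mono hIoc).aestronglyMeasurable measurableSet_uIoc
  have hm4 : ∀ᵐ t' ∂(volume : Measure ℝ), t' ∈ Set.uIoc 0 t →
      ∀ x ∈ Metric.ball (0:ℝ) (δ/2), ‖F' x t'‖ ≤ C := by
    filter_upwards with t' ht' x hx
    exact hboundF' x hx t' (hIoc ht')
  have hm5 : IntervalIntegrable (fun _ : ℝ => C) volume 0 t := intervalIntegrable_const
  have hm6 : ∀ᵐ t' ∂(volume : Measure ℝ), t' ∈ Set.uIoc 0 t →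
      ∀ x ∈ Metric.ball (0:ℝ) (δ/2), HasDerivAt (fun e => F e t') (F' x t') x := by
    filter_upwards with t' ht' x hx
    have hS' : HasDerivAt (fun e => S e t') (Z x t') x := hZ x (hball hx) t' (hIoc ht')
    have hc : HasDerivAt (fun e => u t' + e • v t') (v t') x := by
      simpa using ((hasDerivAt_id x).smul_const (v t')).const_add (u t')
    have hp : HasDerivAt (fun e => (S e t', u t' + e • v t')) (Z x t', v t') x := hS'.prodMk hc
    exact (hdf _).hasFDerivAt.comp_hasDerivAt x hp
  have key : IntervalIntegrable (F' 0) volume 0 t ∧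
      HasDerivAt (fun e => ∫ t' in (0:ℝ)..t, F e t') (∫ t' in (0:ℝ)..t, F' 0 t') 0 :=
    intervalIntegral.hasDerivAt_integral_of_dominated_loc_of_deriv_le (Metric.ball_mem_nhds 0 hr) hm1 hm2 hm3 hm4 hm5 hm6
  obtain ⟨-, hderiv⟩ := key
  -- identify the derivative of ε ↦ S ε t
  have hZ0 : HasDerivAt (fun e => S e t) (Z 0 t) 0 := hZ 0 h0δ t ht
  have heq : (fun e => S e t) =ᶠ[nhds 0] fun e => s₀ + ∫ t' in (0:ℝ)..t, F e t' := by
    filter_upwards [Ioo_mem_nhds h0δ.1 h0δ.2] with e he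
    exact hS_eq e he t ht
  have hderiv2 : HasDerivAt (fun e => s₀ + ∫ t' in (0:ℝ)..t, F e t')
      (∫ t' in (0:ℝ)..t, F' 0 t') 0 := hderiv.const_add s₀
  have huniq : Z 0 t = ∫ t' in (0:ℝ)..t, F' 0 t' :=
    (hZ0.congr_of_eventuallyEq heq.symm).unique hderiv2
  rw [huniq]
  apply intervalIntegral.integral_congr
  intro t' _
  have : u t' + (0:ℝ) • v t' = u t' := by simp
  simp only [hF', this]
  exact aux_fderiv_split f hdf (S 0 t', u t') (Z 0 t') (v t')
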